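/- Consider the Hamiltonian H(L, Θ, P_L, P_Θ) = (1/2)(P_L²/4 + P_Θ²/L²) + L²(k/2 + 1 − cos Θ) with k = 1/2, on {L > 0} × ℝ³, with Hamilton's equations L' = P_L/4, Θ' = P_Θ/L², P_L' = P_Θ²/L³ − 2L(k/2 + 1 − cos Θ), P_Θ' = −L² sin Θ. Then the function Q(L, Θ, P_L, P_Θ) = (3/L²)(L cos(Θ/2)·P_L − 2 sin(Θ/2)·P_Θ)²·P_Θ + 2L³(1 + cos Θ)(sin Θ)·P_L − L²(3 + cos Θ − 2 cos 2Θ)·P_Θ is a first integral: along every differentiable solution with L(t) > 0, the value of Q is constant in t. -/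

import Mathlib

/-- The third first integral Q = W₃ + A₁,₁ P_L + A₁,₂ P_Θ for k = 1/2 (n = 3). -/
noncomputable def pendQ3 (L Θ PL PΘ : ℝ) : ℝ :=
  (3 / L ^ 2) * (L * Real.cos (Θ / 2) * PL - 2 * Real.sin (Θ / 2) * PΘ) ^ 2 * PΘ
    + 2 * L ^ 3 * (1 + Real.cos Θ) * Real.sin Θ * PL
    - L ^ 2 * (3 + Real.cos Θ - 2 * Real.cos (2 * Θ)) * PΘ

theorem Q_is_first_integral_n_three
    (k : ℝ) (hk : k = 1 / 2) (L Θ PL PΘ : ℝ → ℝ)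
    (hLpos : ∀ t, 0 < L t)
    (hL : ∀ t, HasDerivAt L (PL t / 4) t)
    (hΘ : ∀ t, HasDerivAt Θ (PΘ t / L t ^ 2) t)
    (hPL : ∀ t, HasDerivAt PL
      (PΘ t ^ 2 / L t ^ 3 - 2 * L t * (k / 2 + 1 - Real.cos (Θ t))) t)
    (hPΘ : ∀ t, HasDerivAt PΘ (-(L t ^ 2) * Real.sin (Θ t)) t) :
    ∀ t₁ t₂ : ℝ, pendQ3 (L t₁) (Θ t₁) (PL t₁) (PΘ t₁)
      = pendQ3 (L t₂) (Θ t₂) (PL t₂) (PΘ t₂) := by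
  subst hk
  have key : ∀ t, HasDerivAt (fun t => pendQ3 (L t) (Θ t) (PL t) (PΘ t)) 0 t := by
    intro t
    have hLne : L t ≠ 0 := (hLpos t).ne'
    have hL2ne : L t ^ 2 ≠ 0 := pow_ne_zero _ hLne
    have hc2 : HasDerivAt (fun t => Real.cos (Θ t / 2))
        (-Real.sin (Θ t / 2) * (PΘ t / L t ^ 2 / 2)) t :=
      (Real.hasDerivAt_cos _).comp t ((hΘ t).div_const 2)
    have hs2 : HasDerivAt (fun t => Real.sin (Θ t / 2))
        (Real.cos (Θ t / 2) * (PΘ t / L t ^ 2 / 2)) t :=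
      (Real.hasDerivAt_sin _).comp t ((hΘ t).div_const 2)
    have hc : HasDerivAt (fun t => Real.cos (Θ t))
        (-Real.sin (Θ t) * (PΘ t / L t ^ 2)) t :=
      (Real.hasDerivAt_cos _).comp t (hΘ t)
    have hs : HasDerivAt (fun t => Real.sin (Θ t))
        (Real.cos (Θ t) * (PΘ t / L t ^ 2)) t :=
      (Real.hasDerivAt_sin _).comp t (hΘ t)
    have hc2Θ : HasDerivAt (fun t => Real.cos (2 * Θ t))
        (-Real.sin (2 * Θ t) * (2 * (PΘ t / L t ^ 2))) t :=
      (Real.hasDerivAt_cos _).comp t ((hΘ t).const_mul 2)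
    simp only [pendQ3]
    have Hbig := ((((hasDerivAt_const t (3:ℝ)).div ((hL t).pow 2) hL2ne).mul
        (((((hL t).mul hc2).mul (hPL t)).sub ((hs2.const_mul 2).mul (hPΘ t))).pow 2)).mul
        (hPΘ t)).add
      (((((((hL t).pow 3).const_mul 2).mul (hc.const_add 1)).mul hs).mul (hPL t)))
      |>.sub
      (((((hL t).pow 2).mul ((hc.const_add 3).sub (hc2Θ.const_mul 2))).mul (hPΘ t)))
    convert Hbig using 1
    case e'_4 => rfl
    case e'_5 => rfl
    case e'_8 => rfl
    have hx : Θ t = 2 * (Θ t / 2) := by ring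
    have ec : Real.cos (Θ t) = 2 * Real.cos (Θ t / 2) ^ 2 - 1 := by
      conv_lhs => rw [hx, Real.cos_two_mul]
    have es : Real.sin (Θ t) = 2 * Real.sin (Θ t / 2) * Real.cos (Θ t / 2) := by
      conv_lhs => rw [hx, Real.sin_two_mul]
    simp only [Pi.add_apply, Pi.sub_apply, Pi.mul_apply, Pi.div_apply, Pi.pow_apply]
    rw [Real.sin_two_mul, Real.cos_two_mul, ec, es]
    field_simp
    linear_combination (576 * (L t)^4 * (PΘ t)^2 * (Real.sin (Θ t / 2)) * (Real.cos (Θ t / 2)) + (-320) * (L t)^5 * (PL t) * (PΘ t) * (Real.cos (Θ t / 2))^2) * Real.sin_sq_add_cos_sq (Θ t / 2)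
  intro t₁ t₂
  exact is_const_of_deriv_eq_zero (fun t => (key t).differentiableAt)
    (fun t => (key t).deriv) t₁ t₂
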